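/- arXiv:1407.5067 — 3 statements merged into one kernel-verified Lean document; each statement's English description precedes it below -/
import Mathlib

section
/- Let J be a q-periodic block Jacobi matrix on ℓ²(ℤ)^m with invertible off-diagonal blocks a_n (det a_n ≠ 0, a_{n+q}=a_n, b_{n+q}=b_n). Fix λ ∈ ℂ. Then λ cannot be an eigenvalue of the Floquet matrices J_θ for more than 2m distinct values of θ ∈ [0,2π). -/
open Complex Finset

/-- The block of the block Jacobi matrix `J` between block-row `k` and block-column `t`
(nonzero only for `t ∈ {k-1, k, k+1}`): `J_{k,k} = b_k`, `J_{k,k+1} = a_k`,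
`J_{k,k-1} = (a_{k-1})^*`. -/
noncomputable def jacobiBlock {m : ℕ} (a b : ℤ → Matrix (Fin m) (Fin m) ℂ) (k t : ℤ) :
    Matrix (Fin m) (Fin m) ℂ :=
  if t = k then b k else if t = k + 1 then a k else (a (k - 1)).conjTranspose

/-- The Floquet matrix `J_θ` of a `q`-periodic block Jacobi matrix: the `mq × mq`
tridiagonal block matrix with diagonal blocks `b_k`, superdiagonal blocks `a_k`,
subdiagonal blocks `a_{k-1}^*`, and corner entries carrying phases `e^{∓iθ}`.
Entry formula: `(J_θ)_{k,l} = Σ_{t ≡ l (mod q), |t-k| ≤ 1} e^{iθ(t-l)/q} J_{k,t}`. -/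
noncomputable def floquetJ (q m : ℕ) (a b : ℤ → Matrix (Fin m) (Fin m) ℂ) (θ : ℝ) :
    Matrix (Fin q × Fin m) (Fin q × Fin m) ℂ :=
  Matrix.of fun p r =>
    ∑ t ∈ ({(p.1 : ℤ) - 1, (p.1 : ℤ), (p.1 : ℤ) + 1} : Finset ℤ),
      if (t - (r.1 : ℤ)) % (q : ℤ) = 0 then
        Complex.exp (Complex.I * θ * (((t - (r.1 : ℤ)) / (q : ℤ) : ℤ) : ℂ)) *
          (jacobiBlock a b (p.1 : ℤ) t) p.2 r.2
      else 0

namespace Stmt2Aux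

variable {q m : ℕ}

/-- residue of `k` mod `q` as an element of `Fin q`. -/
def res (hq : 0 < q) (k : ℤ) : Fin q :=
  ⟨(k % (q : ℤ)).toNat, by
    have h0 : (0 : ℤ) < q := by exact_mod_cast hq
    have h1 : k % (q : ℤ) < q := Int.emod_lt_of_pos k h0
    have h2 : 0 ≤ k % (q : ℤ) := Int.emod_nonneg k h0.ne'
    omega⟩

lemma res_coe (hq : 0 < q) (k : ℤ) : ((res hq k : ℕ) : ℤ) = k % (q : ℤ) := by
  have h0 : (0 : ℤ) < q := by exact_mod_cast hq
  exact Int.toNat_of_nonneg (Int.emod_nonneg k h0.ne')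

/-- the extension of a vector `v` on `Fin q × Fin m` to a Floquet-quasiperiodic
sequence on `ℤ`. -/
noncomputable def uext (hq : 0 < q) (v : Fin q × Fin m → ℂ) (θ : ℝ) (k : ℤ) :
    Fin m → ℂ :=
  fun j => Complex.exp (Complex.I * θ * ((k / (q : ℤ) : ℤ) : ℂ)) * v (res hq k, j)

lemma floquet_mulVec (hq : 0 < q) (a b : ℤ → Matrix (Fin m) (Fin m) ℂ) (θ : ℝ)
    (v : Fin q × Fin m → ℂ) (p : Fin q × Fin m) :
    (floquetJ q m a b θ).mulVec v p
      = ∑ t ∈ ({(p.1 : ℤ) - 1, (p.1 : ℤ), (p.1 : ℤ) + 1} : Finset ℤ),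
          (jacobiBlock a b (p.1 : ℤ) t).mulVec (uext hq v θ t) p.2 := by
  classical
  have h0 : (0 : ℤ) < q := by exact_mod_cast hq
  have hLHS : (floquetJ q m a b θ).mulVec v p
      = ∑ r1 : Fin q, ∑ t ∈ ({(p.1 : ℤ) - 1, (p.1 : ℤ), (p.1 : ℤ) + 1} : Finset ℤ),
          ∑ r2 : Fin m,
          (if (t - (r1 : ℤ)) % (q : ℤ) = 0 then
            Complex.exp (Complex.I * θ * (((t - (r1 : ℤ)) / (q : ℤ) : ℤ) : ℂ)) *
              (jacobiBlock a b (p.1 : ℤ) t) p.2 r2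
          else 0) * v (r1, r2) := by
    rw [Matrix.mulVec]
    simp only [dotProduct, Fintype.sum_prod_type, floquetJ, Matrix.of_apply]
    refine Finset.sum_congr rfl fun r1 _ => ?_
    rw [show (∑ r2 : Fin m, (∑ t ∈ ({(p.1 : ℤ) - 1, (p.1 : ℤ), (p.1 : ℤ) + 1} : Finset ℤ),
        if (t - (r1 : ℤ)) % (q : ℤ) = 0 then
          Complex.exp (Complex.I * θ * (((t - (r1 : ℤ)) / (q : ℤ) : ℤ) : ℂ)) *
            (jacobiBlock a b (p.1 : ℤ) t) p.2 r2
        else 0) * v (r1, r2))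
      = ∑ r2 : Fin m, ∑ t ∈ ({(p.1 : ℤ) - 1, (p.1 : ℤ), (p.1 : ℤ) + 1} : Finset ℤ),
        (if (t - (r1 : ℤ)) % (q : ℤ) = 0 then
          Complex.exp (Complex.I * θ * (((t - (r1 : ℤ)) / (q : ℤ) : ℤ) : ℂ)) *
            (jacobiBlock a b (p.1 : ℤ) t) p.2 r2
        else 0) * v (r1, r2)
      from Finset.sum_congr rfl fun r2 _ => by rw [Finset.sum_mul]]
    rw [Finset.sum_comm]
  rw [hLHS, Finset.sum_comm]
  refine Finset.sum_congr rfl fun t _ => ?_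
  rw [Finset.sum_eq_single_of_mem (res hq t) (Finset.mem_univ _)]
  · have hcond : (t - ((res hq t : ℕ) : ℤ)) % (q : ℤ) = 0 := by
      rw [res_coe hq, ← Int.emod_eq_emod_iff_emod_sub_eq_zero,
        Int.emod_emod_of_dvd _ dvd_rfl]
    have hdiv : (t - ((res hq t : ℕ) : ℤ)) / (q : ℤ) = t / (q : ℤ) := by
      rw [res_coe hq]
      have : t - t % (q : ℤ) = (q : ℤ) * (t / (q : ℤ)) := by
        have := Int.emod_add_mul_ediv t (q : ℤ); linarith
      rw [this, Int.mul_ediv_cancel_left _ h0.ne']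
    simp only [hcond, if_pos, hdiv]
    rw [Matrix.mulVec]
    simp only [dotProduct, uext]
    refine Finset.sum_congr rfl fun r2 _ => ?_
    ring
  · intro r1 _ hr1
    have hcond : ¬ ((t - (r1 : ℤ)) % (q : ℤ) = 0) := by
      intro hc
      apply hr1
      have h1 : t % (q : ℤ) = (r1 : ℤ) % (q : ℤ) :=
        Int.emod_eq_emod_iff_emod_sub_eq_zero.mpr hc
      have h2 : ((r1 : ℕ) : ℤ) % (q : ℤ) = ((r1 : ℕ) : ℤ) :=
        Int.emod_eq_of_lt (by positivity) (by exact_mod_cast r1.2)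
      apply Fin.ext
      have := res_coe hq t
      omega
    simp [hcond]


/-- the three-term recurrence at site `k`. -/
def Recur (a b : ℤ → Matrix (Fin m) (Fin m) ℂ) (lam : ℂ) (u : ℤ → Fin m → ℂ) (k : ℤ) : Prop :=
  (a (k - 1)).conjTranspose.mulVec (u (k - 1)) + (b k).mulVec (u k)
    + (a k).mulVec (u (k + 1)) = lam • u k

lemma mulVec_eq_zero {M : Matrix (Fin m) (Fin m) ℂ} (hdet : M.det ≠ 0)
    {x : Fin m → ℂ} (h : M.mulVec x = 0) : x = 0 := by
  have hu : IsUnit M.det := isUnit_iff_ne_zero.mpr hdet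
  calc x = (1 : Matrix (Fin m) (Fin m) ℂ).mulVec x := by rw [Matrix.one_mulVec]
    _ = (M⁻¹ * M).mulVec x := by rw [Matrix.nonsing_inv_mul M hu]
    _ = M⁻¹.mulVec (M.mulVec x) := (Matrix.mulVec_mulVec x M⁻¹ M).symm
    _ = 0 := by rw [h, Matrix.mulVec_zero]

lemma recur_unique (a b : ℤ → Matrix (Fin m) (Fin m) ℂ) (lam : ℂ)
    (ha_det : ∀ n, (a n).det ≠ 0) (u : ℤ → Fin m → ℂ)
    (hrec : ∀ k, Recur a b lam u k) (h0 : u 0 = 0) (h1 : u 1 = 0) :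
    ∀ k, u k = 0 := by
  have hdetH : ∀ n, ((a n).conjTranspose).det ≠ 0 := by
    intro n
    rw [Matrix.det_conjTranspose]
    simpa using ha_det n
  have key : ∀ k : ℤ, u k = 0 ∧ u (k + 1) = 0 := by
    have up : ∀ k : ℤ, u k = 0 ∧ u (k + 1) = 0 → u (k + 1) = 0 ∧ u (k + 1 + 1) = 0 := by
      intro k ⟨hk, hk1⟩
      refine ⟨hk1, ?_⟩
      have h := hrec (k + 1)
      unfold Recur at h
      rw [show k + 1 - 1 = k by ring] at h
      rw [hk, hk1] at h
      simp only [Matrix.mulVec_zero, smul_zero, zero_add, add_zero] at h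
      exact mulVec_eq_zero (ha_det (k + 1)) h
    have down : ∀ k : ℤ, u k = 0 ∧ u (k + 1) = 0 → u (k - 1) = 0 ∧ u (k - 1 + 1) = 0 := by
      intro k ⟨hk, hk1⟩
      have h := hrec k
      unfold Recur at h
      rw [hk, hk1] at h
      simp only [Matrix.mulVec_zero, smul_zero, zero_add, add_zero] at h
      refine ⟨mulVec_eq_zero (hdetH (k - 1)) h, ?_⟩
      rw [show k - 1 + 1 = k by ring]; exact hk
    intro k
    induction k using Int.induction_on with
    | zero => exact ⟨h0, by simpa using h1⟩
    | succ n ih => exact up n ih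
    | pred n ih => simpa [sub_eq_add_neg] using down (-(n : ℤ)) ih
  exact fun k => (key k).1

lemma recur_sum {ι : Type*} (a b : ℤ → Matrix (Fin m) (Fin m) ℂ) (lam : ℂ)
    (s : Finset ι) (g : ι → ℂ) (u : ι → ℤ → Fin m → ℂ)
    (h : ∀ i ∈ s, ∀ k, Recur a b lam (u i) k) :
    ∀ k, Recur a b lam (fun k => ∑ i ∈ s, g i • u i k) k := by
  intro k
  unfold Recur
  have hmv : ∀ (M : Matrix (Fin m) (Fin m) ℂ) (w : ι → Fin m → ℂ),
      M.mulVec (∑ i ∈ s, g i • w i) = ∑ i ∈ s, g i • M.mulVec (w i) := by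
    intro M w
    simp only [← Matrix.mulVecLin_apply, map_sum, map_smul]
  simp only [hmv]
  rw [← Finset.sum_add_distrib, ← Finset.sum_add_distrib, Finset.smul_sum]
  refine Finset.sum_congr rfl fun i hi => ?_
  rw [← smul_add, ← smul_add, h i hi k, smul_comm]

lemma uext_shift (hq : 0 < q) (v : Fin q × Fin m → ℂ) (θ : ℝ) (k : ℤ) :
    uext hq v θ (k + q) = Complex.exp (Complex.I * θ) • uext hq v θ k := by
  have h0 : (0 : ℤ) < q := by exact_mod_cast hq
  funext j
  have hdiv : (k + (q : ℤ)) / (q : ℤ) = k / (q : ℤ) + 1 := by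
    have := Int.add_mul_ediv_right k 1 h0.ne'
    simpa using this
  have hmod : (k + (q : ℤ)) % (q : ℤ) = k % (q : ℤ) := by simpa using Int.add_mul_emod_self_left k (q:ℤ) 1
  have hres : res hq (k + q) = res hq k := by
    apply Fin.ext
    have h1 := res_coe hq (k + q)
    have h2 := res_coe hq k
    omega
  simp only [uext, hdiv, hres, Pi.smul_apply, smul_eq_mul]
  rw [← mul_assoc, ← Complex.exp_add]
  push_cast
  ring_nf

lemma uext_base (hq : 0 < q) (v : Fin q × Fin m → ℂ) (θ : ℝ) (p1 : Fin q) :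
    uext hq v θ (p1 : ℤ) = fun j => v (p1, j) := by
  have h0 : (0 : ℤ) < q := by exact_mod_cast hq
  have hlt : ((p1 : ℕ) : ℤ) < (q : ℤ) := by exact_mod_cast p1.2
  have hdiv : ((p1 : ℕ) : ℤ) / (q : ℤ) = 0 := Int.ediv_eq_zero_of_lt (by positivity) hlt
  have hres : res hq (p1 : ℤ) = p1 := by
    apply Fin.ext
    have h2 := res_coe hq (p1 : ℤ)
    have h3 : ((p1 : ℕ) : ℤ) % (q : ℤ) = ((p1 : ℕ) : ℤ) :=
      Int.emod_eq_of_lt (by positivity) hlt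
    omega
  funext j
  simp [uext, hdiv, hres]

lemma uext_ne_zero (hq : 0 < q) {v : Fin q × Fin m → ℂ} (hv : v ≠ 0) (θ : ℝ) :
    (uext hq v θ : ℤ → Fin m → ℂ) ≠ 0 := by
  obtain ⟨⟨p1, p2⟩, hp⟩ := Function.ne_iff.mp hv
  intro h
  apply hp
  have := congrFun (congrFun h (p1 : ℤ)) p2
  rw [uext_base hq v θ p1] at this
  simpa using this

lemma sum3 {M : Type*} [AddCommMonoid M] (k : ℤ) (f : ℤ → M) :
    ∑ t ∈ ({k - 1, k, k + 1} : Finset ℤ), f t = f (k - 1) + f k + f (k + 1) := by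
  rw [Finset.sum_insert (by simp only [Finset.mem_insert, Finset.mem_singleton]; omega),
    Finset.sum_insert (by simp only [Finset.mem_singleton]; omega),
    Finset.sum_singleton, add_assoc]

lemma jacobiBlock_left (a b : ℤ → Matrix (Fin m) (Fin m) ℂ) (k : ℤ) :
    jacobiBlock a b k (k - 1) = (a (k - 1)).conjTranspose := by
  unfold jacobiBlock
  rw [if_neg (by omega : ¬(k - 1 = k)), if_neg (by omega : ¬(k - 1 = k + 1))]

lemma jacobiBlock_mid (a b : ℤ → Matrix (Fin m) (Fin m) ℂ) (k : ℤ) :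
    jacobiBlock a b k k = b k := by simp [jacobiBlock]

lemma jacobiBlock_right (a b : ℤ → Matrix (Fin m) (Fin m) ℂ) (k : ℤ) :
    jacobiBlock a b k (k + 1) = a k := by
  unfold jacobiBlock
  rw [if_neg (by omega : ¬(k + 1 = k)), if_pos rfl]

lemma recur_shift_iff (hq : 0 < q) (a b : ℤ → Matrix (Fin m) (Fin m) ℂ)
    (ha_per : ∀ n, a (n + q) = a n) (hb_per : ∀ n, b (n + q) = b n) (lam : ℂ)
    (v : Fin q × Fin m → ℂ) (θ : ℝ) (k : ℤ) :
    Recur a b lam (uext hq v θ) (k + q) ↔ Recur a b lam (uext hq v θ) k := by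
  have hEne : Complex.exp (Complex.I * θ) ≠ 0 := Complex.exp_ne_zero _
  have h1 : k + (q : ℤ) - 1 = (k - 1) + (q : ℤ) := by ring
  have h2 : k + (q : ℤ) + 1 = (k + 1) + (q : ℤ) := by ring
  unfold Recur
  rw [h1, h2, uext_shift hq v θ (k - 1), uext_shift hq v θ k, uext_shift hq v θ (k + 1),
    ha_per (k - 1), hb_per k, ha_per k]
  rw [Matrix.mulVec_smul, Matrix.mulVec_smul, Matrix.mulVec_smul,
    ← smul_add, ← smul_add, smul_comm lam (Complex.exp (Complex.I * θ))]
  constructor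
  · intro h; exact smul_right_injective (Fin m → ℂ) hEne h
  · intro h; rw [h]

lemma uext_recur (hq : 0 < q) (a b : ℤ → Matrix (Fin m) (Fin m) ℂ)
    (ha_per : ∀ n, a (n + q) = a n) (hb_per : ∀ n, b (n + q) = b n) (lam : ℂ)
    (v : Fin q × Fin m → ℂ) (θ : ℝ)
    (heig : (floquetJ q m a b θ).mulVec v = lam • v) :
    ∀ k, Recur a b lam (uext hq v θ) k := by
  have h0 : (0 : ℤ) < q := by exact_mod_cast hq
  have base : ∀ k : ℤ, 0 ≤ k → k < q → Recur a b lam (uext hq v θ) k := by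
    intro k hk0 hkq
    set p1 : Fin q := ⟨k.toNat, by omega⟩ with hp1
    have hk : ((p1 : ℕ) : ℤ) = k := by simp [hp1]; omega
    unfold Recur
    funext j
    have h := congrFun heig (p1, j)
    rw [floquet_mulVec hq a b θ v (p1, j)] at h
    simp only at h
    rw [hk, sum3 k (fun t => (jacobiBlock a b k t).mulVec (uext hq v θ t) j)] at h
    rw [jacobiBlock_left, jacobiBlock_mid, jacobiBlock_right] at h
    have huk : uext hq v θ k = fun j' => v (p1, j') := by
      rw [← hk, uext_base hq v θ p1]
    rw [huk] at h
    simp only [Pi.add_apply, Pi.smul_apply, smul_eq_mul]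
    rw [huk]
    simpa using h
  have key : ∀ n : ℤ, ∀ k : ℤ, 0 ≤ k → k < q → Recur a b lam (uext hq v θ) (k + n * q) := by
    intro n
    induction n using Int.induction_on with
    | zero => intro k hk0 hkq; simpa using base k hk0 hkq
    | succ n ih =>
        intro k hk0 hkq
        have h := (recur_shift_iff hq a b ha_per hb_per lam v θ (k + n * q)).mpr (ih k hk0 hkq)
        rw [show k + (n + 1 : ℤ) * q = k + n * q + (q : ℤ) by ring]
        exact h
    | pred n ih =>
        intro k hk0 hkq
        have h := (recur_shift_iff hq a b ha_per hb_per lam v θ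
          (k + (-(n : ℤ) - 1) * q)).mp ?_
        · exact_mod_cast h
        · rw [show k + (-(n : ℤ) - 1) * q + (q : ℤ) = k + (-(n : ℤ)) * q by ring]
          exact ih k hk0 hkq
  intro k
  have hd := Int.emod_add_mul_ediv k (q : ℤ)
  have h1 : 0 ≤ k % (q : ℤ) := Int.emod_nonneg k h0.ne'
  have h2 : k % (q : ℤ) < q := Int.emod_lt_of_pos k h0
  have := key (k / (q : ℤ)) (k % (q : ℤ)) h1 h2
  rw [show k % (q : ℤ) + k / (q : ℤ) * q = k by linarith] at this
  exact this

lemma exp_inj_on_Ico {x y : ℝ} (hx : x ∈ Set.Ico (0:ℝ) (2*Real.pi))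
    (hy : y ∈ Set.Ico (0:ℝ) (2*Real.pi))
    (h : Complex.exp (Complex.I * x) = Complex.exp (Complex.I * y)) : x = y := by
  obtain ⟨n, hn⟩ := Complex.exp_eq_exp_iff_exists_int.mp h
  have hI : (Complex.I : ℂ) ≠ 0 := Complex.I_ne_zero
  have h2 : Complex.I * ((x : ℂ) - (y : ℂ) - (n : ℂ) * (2 * (Real.pi : ℂ))) = 0 := by
    linear_combination hn
  have h3 : (x : ℂ) - (y : ℂ) - (n : ℂ) * (2 * (Real.pi : ℂ)) = 0 :=
    (mul_eq_zero.mp h2).resolve_left hI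
  have h4 : ((x - y - (n : ℝ) * (2 * Real.pi) : ℝ) : ℂ) = 0 := by push_cast; linear_combination h3
  have h5 : x - y - (n : ℝ) * (2 * Real.pi) = 0 := by exact_mod_cast h4
  have hpi : 0 < Real.pi := Real.pi_pos
  obtain ⟨hx0, hx2⟩ := hx
  obtain ⟨hy0, hy2⟩ := hy
  have hn1 : (n : ℝ) < 1 := by nlinarith
  have hn2 : (-1 : ℝ) < n := by nlinarith
  have hn1' : n < 1 := by exact_mod_cast hn1
  have hn2' : -1 < n := by exact_mod_cast hn2
  have : n = 0 := by omega
  rw [this] at h5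
  simp at h5
  linarith

end Stmt2Aux

/-- For a `q`-periodic block Jacobi matrix with invertible off-diagonal
blocks, a fixed `λ ∈ ℂ` cannot be an eigenvalue of the Floquet matrices `J_θ` for more
than `2m` distinct values of `θ ∈ [0, 2π)`. -/
theorem stmt2 (q m : ℕ) (hq : 0 < q)
    (a b : ℤ → Matrix (Fin m) (Fin m) ℂ)
    (ha_per : ∀ n, a (n + q) = a n) (hb_per : ∀ n, b (n + q) = b n)
    (hb_herm : ∀ n, (b n).IsHermitian)
    (ha_det : ∀ n, (a n).det ≠ 0)
    (lam : ℂ) :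
    ∀ S : Finset ℝ, (↑S ⊆ Set.Ico (0 : ℝ) (2 * Real.pi)) →
      (∀ θ ∈ S, ∃ v : Fin q × Fin m → ℂ, v ≠ 0 ∧
        (floquetJ q m a b θ).mulVec v = lam • v) →
      S.card ≤ 2 * m := by
  classical
  intro S hS hev
  have hev' : ∀ s : {x // x ∈ S}, ∃ v : Fin q × Fin m → ℂ, v ≠ 0 ∧
      (floquetJ q m a b (s : ℝ)).mulVec v = lam • v := fun s => hev s s.2
  choose v hv0 hveq using hev'
  set u : {x // x ∈ S} → ℤ → Fin m → ℂ :=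
    fun s => Stmt2Aux.uext hq (v s) (s : ℝ) with hu
  let T : Module.End ℂ (ℤ → Fin m → ℂ) :=
    { toFun := fun f k => f (k + q), map_add' := fun f g => rfl,
      map_smul' := fun c f => rfl }
  have heigvec : ∀ s : {x // x ∈ S}, T.HasEigenvector (Complex.exp (Complex.I * ((s : ℝ) : ℂ))) (u s) := by
    intro s
    refine ⟨Module.End.mem_eigenspace_iff.mpr ?_, Stmt2Aux.uext_ne_zero hq (hv0 s) _⟩
    funext k
    exact Stmt2Aux.uext_shift hq (v s) (s : ℝ) k
  have hμ : Function.Injective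
      (fun s : {x // x ∈ S} => Complex.exp (Complex.I * ((s : ℝ) : ℂ))) := by
    intro s1 s2 h
    exact Subtype.ext (Stmt2Aux.exp_inj_on_Ico (hS s1.2) (hS s2.2) h)
  have hindep : LinearIndependent ℂ u :=
    Module.End.eigenvectors_linearIndependent' T _ hμ u heigvec
  have hrecs : ∀ s, ∀ k, Stmt2Aux.Recur a b lam (u s) k := fun s =>
    Stmt2Aux.uext_recur hq a b ha_per hb_per lam (v s) (s : ℝ) (hveq s)
  have hw : LinearIndependent ℂ
      (fun s : {x // x ∈ S} => ((u s 0, u s 1) : (Fin m → ℂ) × (Fin m → ℂ))) := by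
    rw [Fintype.linearIndependent_iff]
    intro g hg
    have hfst : ∀ (f : {x // x ∈ S} → (Fin m → ℂ) × (Fin m → ℂ)),
        (∑ x, f x).1 = ∑ x, (f x).1 := by
      intro f
      exact map_sum (AddMonoidHom.fst (Fin m → ℂ) (Fin m → ℂ)) f Finset.univ
    have hsnd : ∀ (f : {x // x ∈ S} → (Fin m → ℂ) × (Fin m → ℂ)),
        (∑ x, f x).2 = ∑ x, (f x).2 := by
      intro f
      exact map_sum (AddMonoidHom.snd (Fin m → ℂ) (Fin m → ℂ)) f Finset.univ
    have hU0 : (∑ s, g s • u s 0) = 0 := by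
      have h := congrArg Prod.fst hg
      rw [hfst] at h
      simpa using h
    have hU1 : (∑ s, g s • u s 1) = 0 := by
      have h := congrArg Prod.snd hg
      rw [hsnd] at h
      simpa using h
    have hrecU := Stmt2Aux.recur_sum a b lam Finset.univ g u
      (fun s _ => hrecs s)
    have hUzero : ∀ k, (∑ s, g s • u s k) = 0 :=
      Stmt2Aux.recur_unique a b lam ha_det _ hrecU hU0 hU1
    apply Fintype.linearIndependent_iff.mp hindep g
    funext k
    rw [Finset.sum_apply]
    simpa using hUzero k
  calc S.card = Fintype.card {x // x ∈ S} := (Fintype.card_coe S).symm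
    _ ≤ Module.finrank ℂ ((Fin m → ℂ) × (Fin m → ℂ)) := hw.fintype_card_le_finrank
    _ = 2 * m := by
        rw [Module.finrank_prod, Module.finrank_pi]
        simp
        ring
end

section
/- Let J_θ be the Floquet matrices of a q-periodic block Jacobi matrix and A_θ the corresponding Floquet matrices of A = i[J,X]. Let λ_j(θ) be a branch of eigenvalues of J_θ analytic in θ, with associated analytic orthogonal eigenprojection P_j(θ) (at values of θ where λ_j is a simple branch). Then P_j(θ) A_θ P_j(θ) = q (dλ_j/dθ)(θ) P_j(θ). -/
open Complex Finset

/-- Blocks of `A = i[J, X]`: `A_{k,k} = 0`, `A_{k,k+1} = i a_k`,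
`A_{k,k-1} = -i (a_{k-1})^*`. -/
noncomputable def velocityBlock {m : ℕ} (a : ℤ → Matrix (Fin m) (Fin m) ℂ) (k t : ℤ) :
    Matrix (Fin m) (Fin m) ℂ :=
  if t = k then 0
  else if t = k + 1 then Complex.I • a k
  else (-Complex.I) • (a (k - 1)).conjTranspose

/-- The Floquet matrix of a `q`-periodic block operator with blocks `blk k t`
(supported on `|t - k| ≤ 1`), with corner phases `e^{±iθ}`:
`(M_θ)_{k,l} = Σ_{t ≡ l (mod q), |t-k| ≤ 1} e^{iθ(t-l)/q} blk_{k,t}`. -/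
noncomputable def floquetOf (q m : ℕ) (blk : ℤ → ℤ → Matrix (Fin m) (Fin m) ℂ) (θ : ℝ) :
    Matrix (Fin q × Fin m) (Fin q × Fin m) ℂ :=
  Matrix.of fun p r =>
    ∑ t ∈ ({(p.1 : ℤ) - 1, (p.1 : ℤ), (p.1 : ℤ) + 1} : Finset ℤ),
      if (t - (r.1 : ℤ)) % (q : ℤ) = 0 then
        Complex.exp (Complex.I * θ * (((t - (r.1 : ℤ)) / (q : ℤ) : ℤ) : ℂ)) *
          (blk (p.1 : ℤ) t) p.2 r.2
      else 0

section Stmt3Aux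

open Matrix

lemma int_dvd_small {q x : ℤ} (hq : 0 < q) (hx : q ∣ x) (h1 : -q < x) (h2 : x < q) : x = 0 := by
  rcases hx with ⟨n, rfl⟩
  rcases lt_trichotomy n 0 with h|h|h
  · nlinarith
  · simp [h]
  · nlinarith

lemma int_dvd_small2 {q x : ℤ} (hq : 0 < q) (hx : q ∣ x) (h1 : -(2*q) < x) (h2 : x < 2*q) :
    x = -q ∨ x = 0 ∨ x = q := by
  rcases hx with ⟨n, rfl⟩
  have hn : n = -1 ∨ n = 0 ∨ n = 1 := by
    rcases lt_trichotomy n (-1) with h|h|h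
    · nlinarith
    · exact Or.inl h
    · rcases lt_trichotomy n 1 with h'|h'|h'
      · right; left; omega
      · right; right; exact h'
      · nlinarith
  rcases hn with h|h|h <;> subst h <;> simp

lemma hexp_deriv (c : ℂ) (θ : ℝ) :
    HasDerivAt (fun s : ℝ => Complex.exp (Complex.I * s * c))
      (Complex.I * c * Complex.exp (Complex.I * θ * c)) θ := by
  have he : HasDerivAt (fun s : ℝ => (s : ℂ)) 1 θ := by
    exact Complex.ofRealCLM.hasDerivAt
  have h := (he.mul_const (Complex.I * c)).cexp
  have hfun : (fun s : ℝ => Complex.exp ((s : ℂ) * (Complex.I * c)))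
      = fun s : ℝ => Complex.exp (Complex.I * s * c) := by
    funext s; rw [show (s:ℂ) * (Complex.I * c) = Complex.I * s * c by ring]
  rw [hfun] at h
  convert h using 1
  rw [show (θ:ℂ) * (Complex.I * c) = Complex.I * θ * c by ring]
  ring

noncomputable def dd (q m : ℕ) (θ : ℝ) (p : Fin q × Fin m) : ℂ :=
  Complex.exp (Complex.I * θ * (((p.1 : ℕ) : ℂ) / q))

noncomputable def VV (q m : ℕ) (θ : ℝ) : Matrix (Fin q × Fin m) (Fin q × Fin m) ℂ :=
  Matrix.diagonal (dd q m θ)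

lemma star_dd (q m : ℕ) (θ : ℝ) (p : Fin q × Fin m) :
    star (dd q m θ p) = Complex.exp (Complex.I * θ * (-(((p.1 : ℕ) : ℂ) / q))) := by
  unfold dd
  rw [show star (Complex.exp (Complex.I * θ * (((p.1 : ℕ) : ℂ) / q)))
    = Complex.exp ((starRingEnd ℂ) (Complex.I * θ * (((p.1 : ℕ) : ℂ) / q))) from
      (Complex.exp_conj _).symm]
  congr 1
  simp only [_root_.map_mul, map_div₀, map_neg, Complex.conj_I, Complex.conj_ofReal,
    Complex.conj_natCast]
  ring

lemma VV_unitary_left (q m : ℕ) (θ : ℝ) : (VV q m θ)ᴴ * VV q m θ = 1 := by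
  unfold VV
  rw [Matrix.diagonal_conjTranspose, Matrix.diagonal_mul_diagonal]
  have h : (fun i => (star (dd q m θ)) i * dd q m θ i) = fun _ => (1:ℂ) := by
    funext p
    rw [Pi.star_apply, star_dd]
    unfold dd
    rw [← Complex.exp_add, show Complex.I * θ * (-(((p.1 : ℕ) : ℂ) / q)) +
      Complex.I * θ * (((p.1 : ℕ) : ℂ) / q) = 0 by ring, Complex.exp_zero]
  rw [h, Matrix.diagonal_one]

lemma VV_unitary_right (q m : ℕ) (θ : ℝ) : VV q m θ * (VV q m θ)ᴴ = 1 := by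
  unfold VV
  rw [Matrix.diagonal_conjTranspose, Matrix.diagonal_mul_diagonal]
  have h : (fun i => dd q m θ i * (star (dd q m θ)) i) = fun _ => (1:ℂ) := by
    funext p
    rw [Pi.star_apply, star_dd]
    unfold dd
    rw [← Complex.exp_add, show Complex.I * θ * (((p.1 : ℕ) : ℂ) / q) +
      Complex.I * θ * (-(((p.1 : ℕ) : ℂ) / q)) = 0 by ring, Complex.exp_zero]
  rw [h, Matrix.diagonal_one]

lemma sandwich_apply {q m : ℕ} (θ : ℝ) (M : Matrix (Fin q × Fin m) (Fin q × Fin m) ℂ)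
    (i j : Fin q × Fin m) :
    ((VV q m θ)ᴴ * M * VV q m θ) i j = star (dd q m θ i) * M i j * dd q m θ j := by
  unfold VV
  rw [Matrix.diagonal_conjTranspose, Matrix.mul_diagonal, Matrix.diagonal_mul]
  rfl

lemma sandwich_floquet (q m : ℕ) (hq : 0 < q) (blk : ℤ → ℤ → Matrix (Fin m) (Fin m) ℂ)
    (θ : ℝ) (i j : Fin q × Fin m) :
    ((VV q m θ)ᴴ * floquetOf q m blk θ * VV q m θ) i j
      = ∑ t ∈ ({(i.1 : ℤ) - 1, (i.1 : ℤ), (i.1 : ℤ) + 1} : Finset ℤ),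
          if (t - (j.1 : ℤ)) % (q : ℤ) = 0 then
            Complex.exp (Complex.I * θ * (((t : ℂ) - ((i.1 : ℕ) : ℂ)) / q)) *
              (blk (i.1 : ℤ) t) i.2 j.2
          else 0 := by
  rw [sandwich_apply]
  have hq0 : (q : ℂ) ≠ 0 := Nat.cast_ne_zero.mpr hq.ne'
  unfold floquetOf
  simp only [Matrix.of_apply]
  rw [Finset.mul_sum, Finset.sum_mul]
  refine Finset.sum_congr rfl ?_
  intro t _
  rw [mul_ite, mul_zero, ite_mul, zero_mul]
  by_cases hc : (t - (j.1 : ℤ)) % (q : ℤ) = 0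
  · simp only [hc, if_pos rfl, if_true]
    rw [star_dd]
    have hdvd : (q : ℤ) ∣ t - (j.1 : ℤ) := Int.dvd_of_emod_eq_zero hc
    have hnq : (((t - (j.1 : ℤ)) / (q : ℤ) : ℤ) : ℂ) * q = (t : ℂ) - ((j.1 : ℕ) : ℂ) := by
      have := Int.ediv_mul_cancel hdvd
      exact_mod_cast congrArg (Int.cast : ℤ → ℂ) this
    unfold dd
    set B := (blk ((i.1 : ℕ) : ℤ) t) i.2 j.2 with hB
    set x1 := Complex.I * (θ:ℂ) * (-(((i.1 : ℕ):ℂ) / q)) with hx1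
    set x2 := Complex.I * (θ:ℂ) * (((t - (j.1 : ℤ)) / (q : ℤ) : ℤ) : ℂ) with hx2
    set x3 := Complex.I * (θ:ℂ) * (((j.1 : ℕ):ℂ) / q) with hx3
    calc Complex.exp x1 * (Complex.exp x2 * B) * Complex.exp x3
        = Complex.exp x1 * Complex.exp x2 * Complex.exp x3 * B := by ring
      _ = Complex.exp (x1 + x2 + x3) * B := by rw [Complex.exp_add, Complex.exp_add]
      _ = Complex.exp (Complex.I * θ * (((t : ℂ) - ((i.1 : ℕ) : ℂ)) / q)) * B := by
          congr 1
          congr 1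
          have hn' : (((t - (j.1 : ℤ)) / (q : ℤ) : ℤ) : ℂ) = ((t:ℂ) - ((j.1:ℕ):ℂ)) / q := by
            rw [eq_div_iff hq0]; exact hnq
          rw [hx1, hx2, hx3, hn']
          ring
  · simp [hc]

lemma jacobi_sym {m : ℕ} (q : ℕ) (hq : 0 < q) (a b : ℤ → Matrix (Fin m) (Fin m) ℂ)
    (ha_per : ∀ n, a (n + q) = a n) (hb_herm : ∀ n, (b n).IsHermitian)
    {K L t : ℤ} (hK : 0 ≤ K) (hK' : K < q) (hL : 0 ≤ L) (hL' : L < q)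
    (ht : t = L - 1 ∨ t = L ∨ t = L + 1) (hdvd : (q:ℤ) ∣ t - K)
    (s r : Fin m) :
    star ((jacobiBlock a b L t) r s) = (jacobiBlock a b K (K + L - t)) s r := by
  have hqz : (0:ℤ) < q := by exact_mod_cast hq
  rcases ht with rfl|h|rfl
  · -- t = L - 1
    have hx := int_dvd_small2 hqz hdvd (by omega) (by omega)
    have hcase : (K = L - 1) ∨ (L = 0 ∧ K = q - 1) := by omega
    rw [show jacobiBlock a b L (L-1) = (a (L-1)).conjTranspose by
      unfold jacobiBlock; rw [if_neg (by omega), if_neg (by omega)]]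
    rw [Matrix.conjTranspose_apply, star_star]
    rcases hcase with rfl|⟨h0, rfl⟩
    · rw [show jacobiBlock a b (L-1) (L-1+L-(L-1)) = a (L-1) by
        unfold jacobiBlock; rw [if_neg (by omega), if_pos (by omega)]]
    · subst h0
      rw [show jacobiBlock a b ((q:ℤ)-1) ((q:ℤ)-1+0-(0-1)) = a ((q:ℤ)-1) by
        unfold jacobiBlock; rw [if_neg (by omega), if_pos (by omega)]]
      rw [show ((0:ℤ)-1) = -1+(q:ℤ) - (q:ℤ) by ring]
      rw [show a (-1+(q:ℤ)-(q:ℤ)) = a (-1) by norm_num, ← ha_per (-1)]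
      rw [show (-1+(q:ℤ)) = (q:ℤ)-1 by ring]
  · -- t = L
    rw [h] at hdvd ⊢
    have hx := int_dvd_small hqz hdvd (by omega) (by omega)
    have hKL : K = L := by omega
    rw [hKL, show L + L - L = L by ring]
    rw [show jacobiBlock a b L L = b L by unfold jacobiBlock; rw [if_pos rfl]]
    exact (hb_herm L).apply s r
  · -- t = L + 1
    have hx := int_dvd_small2 hqz hdvd (by omega) (by omega)
    have hcase : (K = L + 1) ∨ (L = q - 1 ∧ K = 0) := by omega
    rw [show jacobiBlock a b L (L+1) = a L by
      unfold jacobiBlock; rw [if_neg (by omega), if_pos rfl]]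
    rcases hcase with rfl|⟨hL0, rfl⟩
    · rw [show (L+1) + L - (L+1) = (L+1) - 1 by ring]
      rw [show jacobiBlock a b (L+1) ((L+1)-1) = (a ((L+1)-1)).conjTranspose by
        unfold jacobiBlock; rw [if_neg (by omega), if_neg (by omega)]]
      rw [Matrix.conjTranspose_apply]
      norm_num
    · subst hL0
      rw [show (0:ℤ) + ((q:ℤ)-1) - ((q:ℤ)-1+1) = 0 - 1 by ring]
      rw [show jacobiBlock a b 0 (0-1) = (a (0-1)).conjTranspose by
        unfold jacobiBlock; rw [if_neg (by omega), if_neg (by omega)]]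
      rw [Matrix.conjTranspose_apply]
      rw [show ((0:ℤ)-1) = -1 by ring, ← ha_per (-1)]
      rw [show (-1+(q:ℤ)) = (q:ℤ)-1 by ring]

lemma F_herm (q m : ℕ) (hq : 0 < q) (a b : ℤ → Matrix (Fin m) (Fin m) ℂ)
    (ha_per : ∀ n, a (n + q) = a n) (hb_herm : ∀ n, (b n).IsHermitian) (θ : ℝ) :
    (floquetOf q m (jacobiBlock a b) θ).IsHermitian := by
  rw [Matrix.IsHermitian]
  ext i j
  obtain ⟨k, s⟩ := i
  obtain ⟨l, r⟩ := j
  rw [Matrix.conjTranspose_apply]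
  unfold floquetOf
  simp only [Matrix.of_apply]
  rw [star_sum]
  set K := ((k : ℕ) : ℤ) with hKdef
  set L := ((l : ℕ) : ℤ) with hLdef
  have hK : 0 ≤ K ∧ K < q := ⟨Int.ofNat_nonneg _, by rw [hKdef]; exact_mod_cast k.isLt⟩
  have hL : 0 ≤ L ∧ L < q := ⟨Int.ofNat_nonneg _, by rw [hLdef]; exact_mod_cast l.isLt⟩
  refine Finset.sum_nbij' (fun t => K + L - t) (fun u => K + L - u) ?_ ?_ ?_ ?_ ?_
  · intro t htm
    simp only [Finset.mem_insert, Finset.mem_singleton] at htm ⊢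
    omega
  · intro u hum
    simp only [Finset.mem_insert, Finset.mem_singleton] at hum ⊢
    omega
  · intro t _; ring
  · intro u _; ring
  · intro t htm
    simp only [Finset.mem_insert, Finset.mem_singleton] at htm
    by_cases hc : (q : ℤ) ∣ (t - K)
    · have hc1 : (t - K) % q = 0 := Int.emod_eq_zero_of_dvd hc
      have hc2 : (K + L - t - L) % q = 0 := by
        have hrw : K + L - t - L = -(t - K) := by ring
        rw [hrw]
        exact Int.emod_eq_zero_of_dvd (dvd_neg.mpr hc)
      rw [if_pos hc1, if_pos hc2]
      rw [star_mul']
      congr 1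
      · rw [show star (Complex.exp (Complex.I * θ * (((t - K) / (q:ℤ) : ℤ) : ℂ)))
          = Complex.exp ((starRingEnd ℂ) (Complex.I * θ * (((t - K) / (q:ℤ) : ℤ) : ℂ))) from
            (Complex.exp_conj _).symm]
        congr 1
        have harg : (K + L - t - L) / (q:ℤ) = -((t - K) / (q:ℤ)) := by
          rw [show K + L - t - L = -(t - K) by ring]
          exact Int.neg_ediv_of_dvd hc
        rw [harg]
        push_cast
        simp only [_root_.map_mul, Complex.conj_I, Complex.conj_ofReal, map_intCast]
        ring
      · exact jacobi_sym q hq a b ha_per hb_herm hK.1 hK.2 hL.1 hL.2 (by omega) hc s r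
    · have hc1 : ¬ ((t - K) % q = 0) := fun h => hc (Int.dvd_of_emod_eq_zero h)
      have hc2 : ¬ ((K + L - t - L) % q = 0) := by
        intro h
        apply hc
        have hd := Int.dvd_of_emod_eq_zero h
        rw [show K + L - t - L = -(t - K) by ring] at hd
        exact dvd_neg.mp hd
      rw [if_neg hc1, if_neg hc2, star_zero]

lemma vblock_eq {m : ℕ} (a b : ℤ → Matrix (Fin m) (Fin m) ℂ) (K t : ℤ)
    (ht : t = K - 1 ∨ t = K ∨ t = K + 1) (s r : Fin m) :
    (velocityBlock a K t) s r
      = (Complex.I * (((t : ℤ) : ℂ) - ((K : ℤ) : ℂ))) * (jacobiBlock a b K t) s r := by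
  rcases ht with rfl|rfl|rfl
  · unfold velocityBlock jacobiBlock
    rw [if_neg (by omega), if_neg (by omega), if_neg (by omega), if_neg (by omega)]
    push_cast
    simp only [Matrix.smul_apply, smul_eq_mul]
    ring
  · simp [velocityBlock, jacobiBlock]
  · unfold velocityBlock jacobiBlock
    rw [if_neg (by omega), if_pos rfl, if_neg (by omega), if_pos rfl]
    push_cast
    simp only [Matrix.smul_apply, smul_eq_mul]
    ring

lemma G_hasDeriv (q m : ℕ) (hq : 0 < q) (a b : ℤ → Matrix (Fin m) (Fin m) ℂ) (θ : ℝ)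
    (i j : Fin q × Fin m) :
    HasDerivAt (fun s : ℝ => ((VV q m s)ᴴ * floquetOf q m (jacobiBlock a b) s * VV q m s) i j)
      (((q:ℂ)⁻¹ • ((VV q m θ)ᴴ * floquetOf q m (velocityBlock a) θ * VV q m θ)) i j) θ := by
  have hq0 : (q:ℂ) ≠ 0 := Nat.cast_ne_zero.mpr hq.ne'
  have hfun : (fun s : ℝ => ((VV q m s)ᴴ * floquetOf q m (jacobiBlock a b) s * VV q m s) i j)
      = fun s : ℝ => ∑ t ∈ ({(i.1 : ℤ) - 1, (i.1 : ℤ), (i.1 : ℤ) + 1} : Finset ℤ),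
          if (t - (j.1 : ℤ)) % (q : ℤ) = 0 then
            Complex.exp (Complex.I * s * ((((t:ℤ):ℂ) - ((i.1 : ℕ) : ℂ)) / q)) *
              (jacobiBlock a b (i.1 : ℤ) t) i.2 j.2
          else 0 := by
    funext s
    exact sandwich_floquet q m hq _ s i j
  rw [hfun, Matrix.smul_apply, sandwich_floquet q m hq (velocityBlock a) θ i j, smul_eq_mul,
    Finset.mul_sum]
  apply HasDerivAt.fun_sum
  intro t htm
  simp only [Finset.mem_insert, Finset.mem_singleton] at htm
  by_cases hc : (t - (j.1 : ℤ)) % (q:ℤ) = 0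
  · simp only [if_pos hc]
    have h := (hexp_deriv (((t:ℂ) - ((i.1:ℕ):ℂ)) / q) θ).mul_const
      ((jacobiBlock a b (i.1 : ℤ) t) i.2 j.2)
    refine h.congr_deriv ?_
    rw [vblock_eq a b ((i.1 : ℕ) : ℤ) t (by exact_mod_cast htm) i.2 j.2]
    push_cast
    ring
  · simp only [if_neg hc, mul_zero]
    exact hasDerivAt_const θ 0

end Stmt3Aux

open Matrix

set_option maxHeartbeats 1000000 in
/-- If `λ(θ)` is an analytic branch of eigenvalues of the Floquet matrices
`J_θ` with associated analytic orthogonal eigenprojections `P(θ)`, then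
`P(θ) A_θ P(θ) = q λ'(θ) P(θ)`. -/
theorem stmt3 (q m : ℕ) (hq : 0 < q)
    (a b : ℤ → Matrix (Fin m) (Fin m) ℂ)
    (ha_per : ∀ n, a (n + q) = a n) (hb_per : ∀ n, b (n + q) = b n)
    (hb_herm : ∀ n, (b n).IsHermitian)
    (ha_det : ∀ n, (a n).det ≠ 0)
    (lam : ℝ → ℝ) (hlam_an : ∀ θ, AnalyticAt ℝ lam θ)
    (P : ℝ → Matrix (Fin q × Fin m) (Fin q × Fin m) ℂ)
    (hP_an : ∀ θ i j, AnalyticAt ℝ (fun s => P s i j) θ)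
    (hP_herm : ∀ θ, (P θ).IsHermitian)
    (hP_idem : ∀ θ, P θ * P θ = P θ)
    (hP_eig : ∀ θ (v : Fin q × Fin m → ℂ),
      (floquetOf q m (jacobiBlock a b) θ).mulVec v = (lam θ : ℂ) • v ↔
        (P θ).mulVec v = v) :
    ∀ θ : ℝ,
      P θ * floquetOf q m (velocityBlock a) θ * P θ =
        ((q : ℂ) * (Complex.ofReal (deriv lam θ))) • P θ := by
  intro θ
  have hq0 : (q:ℂ) ≠ 0 := Nat.cast_ne_zero.mpr hq.ne'
  set F : ℝ → Matrix (Fin q × Fin m) (Fin q × Fin m) ℂ :=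
    fun s => floquetOf q m (jacobiBlock a b) s with hFdef
  set A : Matrix (Fin q × Fin m) (Fin q × Fin m) ℂ :=
    floquetOf q m (velocityBlock a) θ with hAdef
  set V : ℝ → Matrix (Fin q × Fin m) (Fin q × Fin m) ℂ := fun s => VV q m s with hVdef
  have hV1 : ∀ s, (V s)ᴴ * V s = 1 := fun s => VV_unitary_left q m s
  have hV2 : ∀ s, V s * (V s)ᴴ = 1 := fun s => VV_unitary_right q m s
  -- `F s * P s = lam s • P s`
  have hFP : ∀ s, F s * P s = (lam s : ℂ) • P s := by
    intro s
    ext i j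
    have hv : (P s).mulVec ((P s).mulVec (Pi.single j 1)) = (P s).mulVec (Pi.single j 1) := by
      rw [Matrix.mulVec_mulVec, hP_idem s]
    have he := (hP_eig s ((P s).mulVec (Pi.single j 1))).mpr hv
    calc (F s * P s) i j = ((F s * P s).mulVec (Pi.single j 1)) i := by
          rw [Matrix.mulVec_single]; simp
      _ = ((F s).mulVec ((P s).mulVec (Pi.single j 1))) i := by rw [Matrix.mulVec_mulVec]
      _ = ((lam s : ℂ) • ((P s).mulVec (Pi.single j 1))) i := by rw [he]
      _ = (lam s : ℂ) * ((P s).mulVec (Pi.single j 1)) i := rfl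
      _ = (lam s : ℂ) * (P s i j) := by rw [Matrix.mulVec_single]; simp
      _ = ((lam s : ℂ) • P s) i j := by rw [Matrix.smul_apply, smul_eq_mul]
  -- `P s * F s = lam s • P s`
  have hPF : ∀ s, P s * F s = (lam s : ℂ) • P s := by
    intro s
    have hFh : (F s)ᴴ = F s := F_herm q m hq a b ha_per hb_herm s
    calc P s * F s = (P s)ᴴ * (F s)ᴴ := by rw [(hP_herm s).eq, hFh]
      _ = (F s * P s)ᴴ := (Matrix.conjTranspose_mul _ _).symm
      _ = ((lam s : ℂ) • P s)ᴴ := by rw [hFP s]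
      _ = (lam s : ℂ) • P s := by
          rw [Matrix.conjTranspose_smul, Complex.star_def, Complex.conj_ofReal, (hP_herm s).eq]
  have hsand : ∀ (X Y : Matrix (Fin q × Fin m) (Fin q × Fin m) ℂ) (s : ℝ),
      ((V s)ᴴ * X * V s) * ((V s)ᴴ * Y * V s) = (V s)ᴴ * (X * Y) * V s := by
    intro X Y s
    have h1 : V s * ((V s)ᴴ * (Y * V s)) = Y * V s := by
      rw [← Matrix.mul_assoc, hV2 s, Matrix.one_mul]
    calc ((V s)ᴴ * X * V s) * ((V s)ᴴ * Y * V s)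
        = (V s)ᴴ * (X * (V s * ((V s)ᴴ * (Y * V s)))) := by simp only [Matrix.mul_assoc]
      _ = (V s)ᴴ * (X * (Y * V s)) := by rw [h1]
      _ = (V s)ᴴ * (X * Y) * V s := by simp only [Matrix.mul_assoc]
  have hGQ : ∀ s, ((V s)ᴴ * F s * V s) * ((V s)ᴴ * P s * V s)
      = (lam s : ℂ) • ((V s)ᴴ * P s * V s) := by
    intro s
    rw [hsand, hFP s, Matrix.mul_smul, Matrix.smul_mul]
  have hQG : ∀ s, ((V s)ᴴ * P s * V s) * ((V s)ᴴ * F s * V s)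
      = (lam s : ℂ) • ((V s)ᴴ * P s * V s) := by
    intro s
    rw [hsand, hPF s, Matrix.mul_smul, Matrix.smul_mul]
  have hQQ : ((V θ)ᴴ * P θ * V θ) * ((V θ)ᴴ * P θ * V θ) = (V θ)ᴴ * P θ * V θ := by
    rw [hsand, hP_idem θ]
  -- derivatives of entries
  have hdd_deriv : ∀ (p : Fin q × Fin m),
      HasDerivAt (fun s : ℝ => dd q m s p)
        (Complex.I * (((p.1 : ℕ) : ℂ) / q) * dd q m θ p) θ :=
    fun p => hexp_deriv (((p.1 : ℕ) : ℂ) / q) θ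
  have hsdd_deriv : ∀ (p : Fin q × Fin m),
      HasDerivAt (fun s : ℝ => star (dd q m s p))
        (Complex.I * (-(((p.1 : ℕ) : ℂ) / q)) * star (dd q m θ p)) θ := by
    intro p
    have hf : (fun s : ℝ => star (dd q m s p))
        = fun s : ℝ => Complex.exp (Complex.I * s * (-(((p.1 : ℕ) : ℂ) / q))) :=
      funext fun s => star_dd q m s p
    rw [hf, star_dd]
    exact hexp_deriv (-(((p.1 : ℕ) : ℂ) / q)) θ
  have hQdiff : ∀ i j, DifferentiableAt ℝ (fun s => ((V s)ᴴ * P s * V s) i j) θ := by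
    intro i j
    have hf : (fun s => ((V s)ᴴ * P s * V s) i j)
        = fun s => star (dd q m s i) * P s i j * dd q m s j :=
      funext fun s => sandwich_apply s (P s) i j
    rw [hf]
    exact (((hsdd_deriv i).differentiableAt.mul
      (hP_an θ i j).differentiableAt).mul (hdd_deriv j).differentiableAt)
  set Q' : Matrix (Fin q × Fin m) (Fin q × Fin m) ℂ :=
    Matrix.of (fun i j => deriv (fun s => ((V s)ᴴ * P s * V s) i j) θ) with hQ'def
  have hQ'd : ∀ i j, HasDerivAt (fun s => ((V s)ᴴ * P s * V s) i j) (Q' i j) θ := fun i j =>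
    (hQdiff i j).hasDerivAt
  set D : Matrix (Fin q × Fin m) (Fin q × Fin m) ℂ := (q:ℂ)⁻¹ • ((V θ)ᴴ * A * V θ) with hDdef
  have hGd : ∀ i j, HasDerivAt (fun s => ((V s)ᴴ * F s * V s) i j) (D i j) θ := fun i j =>
    G_hasDeriv q m hq a b θ i j
  have hlamC : HasDerivAt (fun s => ((lam s : ℝ) : ℂ)) ((deriv lam θ : ℝ) : ℂ) θ :=
    ((hlam_an θ).differentiableAt.hasDerivAt).ofReal_comp
  -- the differentiated eigenvalue equation
  have E1 : D * ((V θ)ᴴ * P θ * V θ) + ((V θ)ᴴ * F θ * V θ) * Q'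
      = ((deriv lam θ : ℝ) : ℂ) • ((V θ)ᴴ * P θ * V θ) + (lam θ : ℂ) • Q' := by
    ext i j
    have h1 : HasDerivAt (fun s => (((V s)ᴴ * F s * V s) * ((V s)ᴴ * P s * V s)) i j)
        ((D * ((V θ)ᴴ * P θ * V θ) + ((V θ)ᴴ * F θ * V θ) * Q') i j) θ := by
      have hf : (fun s => (((V s)ᴴ * F s * V s) * ((V s)ᴴ * P s * V s)) i j)
          = fun s => ∑ x, ((V s)ᴴ * F s * V s) i x * ((V s)ᴴ * P s * V s) x j := by
        funext s; rw [Matrix.mul_apply]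
      rw [hf]
      have hsum := HasDerivAt.fun_sum (u := Finset.univ)
        (A := fun x (s : ℝ) => ((V s)ᴴ * F s * V s) i x * ((V s)ᴴ * P s * V s) x j)
        (A' := fun x => D i x * ((V θ)ᴴ * P θ * V θ) x j + ((V θ)ᴴ * F θ * V θ) i x * Q' x j)
        (fun x _ => (hGd i x).mul (hQ'd x j))
      refine hsum.congr_deriv ?_
      rw [Matrix.add_apply, Matrix.mul_apply, Matrix.mul_apply, ← Finset.sum_add_distrib]
    have h2 : HasDerivAt (fun s => (((V s)ᴴ * F s * V s) * ((V s)ᴴ * P s * V s)) i j)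
        ((((deriv lam θ : ℝ) : ℂ) • ((V θ)ᴴ * P θ * V θ) + (lam θ : ℂ) • Q') i j) θ := by
      have heq : (fun s => (((V s)ᴴ * F s * V s) * ((V s)ᴴ * P s * V s)) i j)
          = fun s => (lam s : ℂ) * ((V s)ᴴ * P s * V s) i j := by
        funext s; rw [hGQ s, Matrix.smul_apply, smul_eq_mul]
      rw [heq]
      have hval : ((((deriv lam θ : ℝ) : ℂ) • ((V θ)ᴴ * P θ * V θ) + (lam θ : ℂ) • Q') i j)
          = ((deriv lam θ : ℝ) : ℂ) * ((V θ)ᴴ * P θ * V θ) i j + (lam θ : ℂ) * Q' i j := by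
        rw [Matrix.add_apply, Matrix.smul_apply, Matrix.smul_apply, smul_eq_mul, smul_eq_mul]
      rw [hval]
      exact hlamC.mul (hQ'd i j)
    exact h1.unique h2
  -- multiply E1 on the left by `Q θ` and cancel
  have E2 : ((V θ)ᴴ * P θ * V θ) * D * ((V θ)ᴴ * P θ * V θ)
      = ((deriv lam θ : ℝ) : ℂ) • ((V θ)ᴴ * P θ * V θ) := by
    have hDQ : D * ((V θ)ᴴ * P θ * V θ)
        = (((deriv lam θ : ℝ) : ℂ) • ((V θ)ᴴ * P θ * V θ) + (lam θ : ℂ) • Q')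
          - ((V θ)ᴴ * F θ * V θ) * Q' := eq_sub_of_add_eq E1
    calc ((V θ)ᴴ * P θ * V θ) * D * ((V θ)ᴴ * P θ * V θ)
        = ((V θ)ᴴ * P θ * V θ) * (D * ((V θ)ᴴ * P θ * V θ)) := Matrix.mul_assoc _ _ _
      _ = ((V θ)ᴴ * P θ * V θ) *
          ((((deriv lam θ : ℝ) : ℂ) • ((V θ)ᴴ * P θ * V θ) + (lam θ : ℂ) • Q')
            - ((V θ)ᴴ * F θ * V θ) * Q') := by rw [hDQ]
      _ = (((deriv lam θ : ℝ) : ℂ) • (((V θ)ᴴ * P θ * V θ) * ((V θ)ᴴ * P θ * V θ))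
            + (lam θ : ℂ) • (((V θ)ᴴ * P θ * V θ) * Q'))
          - ((V θ)ᴴ * P θ * V θ) * (((V θ)ᴴ * F θ * V θ) * Q') := by
            rw [Matrix.mul_sub, Matrix.mul_add, Matrix.mul_smul, Matrix.mul_smul]
      _ = (((deriv lam θ : ℝ) : ℂ) • ((V θ)ᴴ * P θ * V θ)
            + (lam θ : ℂ) • (((V θ)ᴴ * P θ * V θ) * Q'))
          - (lam θ : ℂ) • (((V θ)ᴴ * P θ * V θ) * Q') := by
            rw [hQQ, ← Matrix.mul_assoc, hQG θ, Matrix.smul_mul]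
      _ = ((deriv lam θ : ℝ) : ℂ) • ((V θ)ᴴ * P θ * V θ) := add_sub_cancel_right _ _
  -- unsandwich
  have hunsand : ∀ (X : Matrix (Fin q × Fin m) (Fin q × Fin m) ℂ),
      V θ * ((V θ)ᴴ * X * V θ) * (V θ)ᴴ = X := by
    intro X
    calc V θ * ((V θ)ᴴ * X * V θ) * (V θ)ᴴ
        = V θ * ((V θ)ᴴ * (X * (V θ * (V θ)ᴴ))) := by simp only [Matrix.mul_assoc]
      _ = V θ * ((V θ)ᴴ * X) := by rw [hV2 θ, Matrix.mul_one]
      _ = X := by rw [← Matrix.mul_assoc, hV2 θ, Matrix.one_mul]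
  have E3 : ((V θ)ᴴ * P θ * V θ) * D * ((V θ)ᴴ * P θ * V θ)
      = (q:ℂ)⁻¹ • ((V θ)ᴴ * (P θ * A * P θ) * V θ) := by
    rw [hDdef, Matrix.mul_smul, Matrix.smul_mul]
    congr 1
    rw [hsand (P θ) A θ, hsand (P θ * A) (P θ) θ]
  have E4 : (q:ℂ)⁻¹ • ((V θ)ᴴ * (P θ * A * P θ) * V θ)
      = ((deriv lam θ : ℝ) : ℂ) • ((V θ)ᴴ * P θ * V θ) := by
    rw [← E3, E2]
  have E5 := congrArg (fun M => V θ * M * (V θ)ᴴ) E4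
  simp only [Matrix.mul_smul, Matrix.smul_mul] at E5
  rw [hunsand (P θ * A * P θ), hunsand (P θ)] at E5
  calc P θ * A * P θ = (q:ℂ) • ((q:ℂ)⁻¹ • (P θ * A * P θ)) := by
        rw [smul_smul, mul_inv_cancel₀ hq0, one_smul]
    _ = (q:ℂ) • (((deriv lam θ : ℝ) : ℂ) • P θ) := by rw [E5]
    _ = ((q : ℂ) * (Complex.ofReal (deriv lam θ))) • P θ := by rw [smul_smul]
end

section
/- Fix a bounded potential W on ℤ, t > 0, p > 0, and m ∈ ℕ. For every ε > 0 there exists δ > 0 such that for all potentials V with ‖V − W‖_∞ < δ and all ψ ∈ ℓ²(ℤ) satisfying |ψ(n)| ≤ m e^{-|n|/m} for all n, one has |⟨ψ, e^{it(Δ+V)} |X|^p e^{-it(Δ+V)} ψ⟩ − ⟨ψ, e^{it(Δ+W)} |X|^p e^{-it(Δ+W)} ψ⟩| < ε. -/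
open NormedSpace Nat
open NormedSpace Nat
noncomputable abbrev E2 := lp (fun _ : ℤ => ℂ) 2

noncomputable def coord (n : ℤ) : E2 →L[ℂ] ℂ :=
  LinearMap.mkContinuous
    { toFun := fun u => u n
      map_add' := fun u v => by simp [lp.coeFn_add]
      map_smul' := fun c u => by simp [lp.coeFn_smul] }
    1 (fun u => by rw [one_mul]; exact lp.norm_apply_le_norm (by norm_num) u n)

lemma exp_apply_coord (T : E2 →L[ℂ] E2) (ψ : E2) (n : ℤ) :
    (NormedSpace.exp T ψ) n = ∑' (k : ℕ), (((k ! : ℂ)⁻¹ • T ^ k) ψ) n := by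
  have hs : Summable fun (k : ℕ) => ((k ! : ℂ)⁻¹ • T ^ k) := expSeries_summable' T
  have := ((coord n).comp (ContinuousLinearMap.apply ℂ E2 ψ)).map_tsum hs
  rw [exp_eq_tsum ℂ]
  exact this

lemma summable_coord (T : E2 →L[ℂ] E2) (ψ : E2) (n : ℤ) :
    Summable fun (k : ℕ) => (((k ! : ℂ)⁻¹ • T ^ k) ψ) n := by
  have hs : Summable fun (k : ℕ) => ((k ! : ℂ)⁻¹ • T ^ k) := expSeries_summable' T
  exact hs.map ((coord n).comp (ContinuousLinearMap.apply ℂ E2 ψ)) (ContinuousLinearMap.continuous _)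

lemma step {Cb : ℝ} {m : ℕ} {V : ℤ → ℝ} (hV : ∀ n, |V n| ≤ Cb)
    {H : E2 →L[ℂ] E2} (hH : ∀ u n, (H u) n = u (n + 1) + u (n - 1) + (V n : ℂ) * u n)
    {u : E2} {A : ℝ} (hA : 0 ≤ A)
    (hu : ∀ n : ℤ, ‖u n‖ ≤ A * Real.exp (-|(n : ℝ)| / m)) (n : ℤ) :
    ‖(H u) n‖ ≤ ((2 + Cb) * Real.exp (1 / m)) * A * Real.exp (-|(n : ℝ)| / m) := by
  have hC0 : 0 ≤ Cb := le_trans (abs_nonneg _) (hV 0)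
  have hE1 : (1:ℝ) ≤ Real.exp (1 / m) := Real.one_le_exp (by positivity)
  have hE : 0 < Real.exp (-|(n : ℝ)| / m) := Real.exp_pos _
  have key : ∀ j : ℤ, |(n:ℝ)| ≤ |(j:ℝ)| + 1 →
      ‖u j‖ ≤ A * (Real.exp (1/(m:ℝ)) * Real.exp (-|(n:ℝ)|/m)) := by
    intro j hj
    refine (hu j).trans ?_
    rw [← Real.exp_add]
    refine mul_le_mul_of_nonneg_left (Real.exp_le_exp.2 ?_) hA
    have hm' : (0:ℝ) < m ∨ (m:ℝ) = 0 := by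
      rcases eq_or_ne (m:ℝ) 0 with h | h
      · exact Or.inr h
      · exact Or.inl (lt_of_le_of_ne (by positivity) (Ne.symm h))
    rcases hm' with hm' | hm'
    · rw [← add_div]
      exact (div_le_div_iff_of_pos_right hm').2 (by linarith)
    · simp [hm']
  have h1 : ‖u (n+1)‖ ≤ A * (Real.exp (1/(m:ℝ)) * Real.exp (-|(n:ℝ)|/m)) := by
    refine key (n+1) ?_
    push_cast
    have := abs_add_le ((n:ℝ)+1) (-1)
    simp at this
    linarith
  have h2 : ‖u (n-1)‖ ≤ A * (Real.exp (1/(m:ℝ)) * Real.exp (-|(n:ℝ)|/m)) := by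
    refine key (n-1) ?_
    push_cast
    have := abs_add_le ((n:ℝ)-1) 1
    simp at this
    linarith
  have h3 : ‖(V n : ℂ) * u n‖ ≤ Cb * (A * Real.exp (-|(n:ℝ)|/m)) := by
    rw [norm_mul, Complex.norm_real, Real.norm_eq_abs]
    exact mul_le_mul (hV n) (hu n) (norm_nonneg _) hC0
  rw [hH u n]
  calc ‖u (n+1) + u (n-1) + (V n : ℂ) * u n‖
      ≤ ‖u (n+1)‖ + ‖u (n-1)‖ + ‖(V n : ℂ) * u n‖ := norm_add₃_le
    _ ≤ ((2 + Cb) * Real.exp (1 / m)) * A * Real.exp (-|(n : ℝ)| / m) := by nlinarith [mul_nonneg (mul_nonneg hC0 hA) (mul_nonneg (sub_nonneg.2 hE1) hE.le)]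

lemma pow_bound {Cb : ℝ} {m : ℕ} {V : ℤ → ℝ} (hV : ∀ n, |V n| ≤ Cb)
    {H : E2 →L[ℂ] E2} (hH : ∀ u n, (H u) n = u (n + 1) + u (n - 1) + (V n : ℂ) * u n)
    {ψ : E2} {A : ℝ} (hA : 0 ≤ A)
    (hψ : ∀ n : ℤ, ‖ψ n‖ ≤ A * Real.exp (-|(n : ℝ)| / m)) (k : ℕ) (n : ℤ) :
    ‖((H ^ k) ψ) n‖ ≤ ((2 + Cb) * Real.exp (1 / m)) ^ k * A * Real.exp (-|(n : ℝ)| / m) := by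
  induction k generalizing n with
  | zero => simpa using hψ n
  | succ k ih =>
    have hC0 : 0 ≤ Cb := le_trans (abs_nonneg _) (hV 0)
    have hB : 0 ≤ (2 + Cb) * Real.exp (1 / (m:ℝ)) := by positivity
    have hrec := step hV hH (u := (H ^ k) ψ)
      (A := ((2 + Cb) * Real.exp (1 / (m:ℝ))) ^ k * A) (by positivity) ih n
    rw [show H ^ (k+1) = H * H ^ k from pow_succ' H k, ContinuousLinearMap.mul_apply]
    calc ‖(H ((H ^ k) ψ)) n‖
        ≤ ((2 + Cb) * Real.exp (1/(m:ℝ))) * (((2 + Cb) * Real.exp (1/(m:ℝ)))^k * A) *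
          Real.exp (-|(n : ℝ)| / m) := hrec
      _ = ((2 + Cb) * Real.exp (1 / (m:ℝ))) ^ (k+1) * A * Real.exp (-|(n : ℝ)| / m) := by
          ring

lemma diff_bound {Cb δ : ℝ} {m : ℕ} {V W : ℤ → ℝ}
    (hV : ∀ n, |V n| ≤ Cb) (hW : ∀ n, |W n| ≤ Cb) (hVW : ∀ n, |V n - W n| ≤ δ)
    {HV HW : E2 →L[ℂ] E2}
    (hHV : ∀ u n, (HV u) n = u (n + 1) + u (n - 1) + (V n : ℂ) * u n)
    (hHW : ∀ u n, (HW u) n = u (n + 1) + u (n - 1) + (W n : ℂ) * u n)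
    {ψ : E2} {A : ℝ} (hA : 0 ≤ A)
    (hψ : ∀ n : ℤ, ‖ψ n‖ ≤ A * Real.exp (-|(n : ℝ)| / m)) (k : ℕ) (n : ℤ) :
    ‖((HV ^ k) ψ) n - ((HW ^ k) ψ) n‖ ≤
      k * δ * ((2 + Cb) * Real.exp (1 / m)) ^ k * A * Real.exp (-|(n : ℝ)| / m) := by
  have hC0 : 0 ≤ Cb := le_trans (abs_nonneg _) (hV 0)
  have hδ0 : 0 ≤ δ := le_trans (abs_nonneg _) (hVW 0)
  set B : ℝ := (2 + Cb) * Real.exp (1 / (m:ℝ)) with hBdef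
  have hB0 : 0 ≤ B := by positivity
  have hB1 : 1 ≤ B := by
    have : (1:ℝ) ≤ Real.exp (1 / (m:ℝ)) := Real.one_le_exp (by positivity)
    nlinarith
  induction k generalizing n with
  | zero => simp
  | succ k ih =>
    -- D = difference vector
    set D : E2 := (HV ^ k) ψ - (HW ^ k) ψ with hD
    have hDco : ∀ j : ℤ, (D : ℤ → ℂ) j = ((HV ^ k) ψ) j - ((HW ^ k) ψ) j := by
      intro j; rw [hD, lp.coeFn_sub]; rfl
    have hDbd : ∀ j : ℤ, ‖(D : ℤ → ℂ) j‖ ≤ (k * δ * B ^ k * A) * Real.exp (-|(j : ℝ)| / m) := by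
      intro j; rw [hDco j]
      simpa [mul_assoc] using ih j
    have hHVD := step hV hHV (u := D) (A := k * δ * B ^ k * A) (by positivity) hDbd n
    -- pointwise identity
    have hid : ((HV ^ (k+1)) ψ) n - ((HW ^ (k+1)) ψ) n
        = (HV D) n + ((V n : ℂ) - (W n : ℂ)) * ((HW ^ k) ψ) n := by
      rw [show HV ^ (k+1) = HV * HV ^ k from pow_succ' HV k,
        show HW ^ (k+1) = HW * HW ^ k from pow_succ' HW k,
        ContinuousLinearMap.mul_apply, ContinuousLinearMap.mul_apply,
        hHV ((HV ^ k) ψ) n, hHW ((HW ^ k) ψ) n, hHV D n, hDco, hDco, hDco]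
      ring
    have hWk := pow_bound hW hHW hA hψ k n
    have hVWn : ‖((V n : ℂ) - (W n : ℂ)) * ((HW ^ k) ψ) n‖
        ≤ δ * (B ^ k * A * Real.exp (-|(n : ℝ)| / m)) := by
      rw [norm_mul, ← Complex.ofReal_sub, Complex.norm_real, Real.norm_eq_abs]
      exact mul_le_mul (hVW n) hWk (norm_nonneg _) hδ0
    rw [hid]
    have hE : 0 < Real.exp (-|(n : ℝ)| / m) := Real.exp_pos _
    calc ‖(HV D) n + ((V n : ℂ) - (W n : ℂ)) * ((HW ^ k) ψ) n‖
        ≤ ‖(HV D) n‖ + ‖((V n : ℂ) - (W n : ℂ)) * ((HW ^ k) ψ) n‖ := norm_add_le _ _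
      _ ≤ B * (k * δ * B ^ k * A) * Real.exp (-|(n : ℝ)| / m)
          + δ * (B ^ k * A * Real.exp (-|(n : ℝ)| / m)) := add_le_add hHVD hVWn
      _ ≤ (k+1 : ℕ) * δ * B ^ (k+1) * A * Real.exp (-|(n : ℝ)| / m) := by
          push_cast
          rw [pow_succ' B k]
          nlinarith [mul_nonneg (mul_nonneg (mul_nonneg (mul_nonneg hδ0 hA) hE.le)
            (pow_nonneg hB0 k)) (sub_nonneg.2 hB1)]

lemma smul_coord (a : ℂ) (T : E2 →L[ℂ] E2) (ψ : E2) (n : ℤ) :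
    ((a • T) ψ) n = a * (T ψ) n := by
  rw [ContinuousLinearMap.smul_apply, lp.coeFn_smul]
  rfl

lemma exp_term_coord (c : ℂ) (H : E2 →L[ℂ] E2) (ψ : E2) (k : ℕ) (n : ℤ) :
    (((k ! : ℂ)⁻¹ • (c • H) ^ k) ψ) n = ((k ! : ℂ)⁻¹ * c ^ k) * (((H ^ k) ψ) n) := by
  rw [smul_pow, smul_smul, smul_coord]

lemma exp_pointwise {c : ℂ} {H : E2 →L[ℂ] E2} {ψ : E2} {A B : ℝ} {m : ℕ}
    (hA : 0 ≤ A) (hB : 0 ≤ B)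
    (hbd : ∀ (k : ℕ) (n : ℤ), ‖((H ^ k) ψ) n‖ ≤ B ^ k * A * Real.exp (-|(n : ℝ)| / m))
    (n : ℤ) :
    ‖(NormedSpace.exp (c • H) ψ) n‖ ≤ A * Real.exp (‖c‖ * B) * Real.exp (-|(n : ℝ)| / m) := by
  have hterm : ∀ k : ℕ, ‖(((k ! : ℂ)⁻¹ • (c • H) ^ k) ψ) n‖ ≤
      (‖c‖ * B) ^ k / k ! * (A * Real.exp (-|(n : ℝ)| / m)) := by
    intro k
    rw [exp_term_coord, norm_mul, norm_mul, norm_inv, norm_pow, Complex.norm_natCast]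
    calc (↑k !)⁻¹ * ‖c‖ ^ k * ‖((H ^ k) ψ) n‖
        ≤ (↑k !)⁻¹ * ‖c‖ ^ k * (B ^ k * A * Real.exp (-|(n : ℝ)| / m)) := by
          gcongr; exact hbd k n
      _ = (‖c‖ * B) ^ k / k ! * (A * Real.exp (-|(n : ℝ)| / m)) := by
          rw [mul_pow]; ring
  have hsum2 : Summable fun k : ℕ => (‖c‖ * B) ^ k / k ! * (A * Real.exp (-|(n : ℝ)| / m)) :=
    (Real.summable_pow_div_factorial _).mul_right _
  have hsumn : Summable fun k : ℕ => ‖(((k ! : ℂ)⁻¹ • (c • H) ^ k) ψ) n‖ :=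
    Summable.of_nonneg_of_le (fun k => norm_nonneg _) hterm hsum2
  rw [exp_apply_coord]
  calc ‖∑' (k : ℕ), (((k ! : ℂ)⁻¹ • (c • H) ^ k) ψ) n‖
      ≤ ∑' (k : ℕ), ‖(((k ! : ℂ)⁻¹ • (c • H) ^ k) ψ) n‖ := norm_tsum_le_tsum_norm hsumn
    _ ≤ ∑' (k : ℕ), (‖c‖ * B) ^ k / k ! * (A * Real.exp (-|(n : ℝ)| / m)) :=
        Summable.tsum_le_tsum hterm hsumn hsum2
    _ = (∑' (k : ℕ), (‖c‖ * B) ^ k / k !) * (A * Real.exp (-|(n : ℝ)| / m)) := tsum_mul_right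
    _ = Real.exp (‖c‖ * B) * (A * Real.exp (-|(n : ℝ)| / m)) := by
        rw [Real.exp_eq_exp_ℝ, exp_eq_tsum_div]
    _ = A * Real.exp (‖c‖ * B) * Real.exp (-|(n : ℝ)| / m) := by ring

lemma exp_diff_pointwise {c : ℂ} {HV HW : E2 →L[ℂ] E2} {ψ : E2} {A B δ : ℝ} {m : ℕ}
    (hA : 0 ≤ A) (hB : 0 ≤ B) (hδ : 0 ≤ δ)
    (hd : ∀ (k : ℕ) (n : ℤ), ‖((HV ^ k) ψ) n - ((HW ^ k) ψ) n‖ ≤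
        (k : ℝ) * δ * B ^ k * A * Real.exp (-|(n : ℝ)| / m)) (n : ℤ) :
    ‖(NormedSpace.exp (c • HV) ψ) n - (NormedSpace.exp (c • HW) ψ) n‖ ≤
      δ * A * Real.exp (2 * ‖c‖ * B) * Real.exp (-|(n : ℝ)| / m) := by
  have hterm : ∀ k : ℕ, ‖(((k ! : ℂ)⁻¹ • (c • HV) ^ k) ψ) n - (((k ! : ℂ)⁻¹ • (c • HW) ^ k) ψ) n‖
      ≤ (2 * ‖c‖ * B) ^ k / k ! * (δ * A * Real.exp (-|(n : ℝ)| / m)) := by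
    intro k
    have h2k : (k : ℝ) ≤ 2 ^ k := by exact_mod_cast (Nat.lt_two_pow_self (n := k)).le
    rw [exp_term_coord, exp_term_coord, ← mul_sub, norm_mul, norm_mul, norm_inv,
      norm_pow, Complex.norm_natCast]
    calc (↑k !)⁻¹ * ‖c‖ ^ k * ‖((HV ^ k) ψ) n - ((HW ^ k) ψ) n‖
        ≤ (↑k !)⁻¹ * ‖c‖ ^ k * ((k : ℝ) * δ * B ^ k * A * Real.exp (-|(n : ℝ)| / m)) := by
          gcongr; exact hd k n
      _ = (k : ℝ) * ((↑k !)⁻¹ * ‖c‖ ^ k * B ^ k * δ * A * Real.exp (-|(n : ℝ)| / m)) := by ring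
      _ ≤ 2 ^ k * ((↑k !)⁻¹ * ‖c‖ ^ k * B ^ k * δ * A * Real.exp (-|(n : ℝ)| / m)) := by
          refine mul_le_mul_of_nonneg_right h2k ?_
          positivity
      _ = (2 * ‖c‖ * B) ^ k / k ! * (δ * A * Real.exp (-|(n : ℝ)| / m)) := by
          rw [mul_pow, mul_pow]; ring
  have hsum2 : Summable fun k : ℕ =>
      (2 * ‖c‖ * B) ^ k / k ! * (δ * A * Real.exp (-|(n : ℝ)| / m)) :=
    (Real.summable_pow_div_factorial _).mul_right _
  have hsumn : Summable fun k : ℕ =>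
      ‖(((k ! : ℂ)⁻¹ • (c • HV) ^ k) ψ) n - (((k ! : ℂ)⁻¹ • (c • HW) ^ k) ψ) n‖ :=
    Summable.of_nonneg_of_le (fun k => norm_nonneg _) hterm hsum2
  rw [exp_apply_coord, exp_apply_coord,
    ← Summable.tsum_sub (summable_coord (c • HV) ψ n) (summable_coord (c • HW) ψ n)]
  calc ‖∑' (k : ℕ), ((((k ! : ℂ)⁻¹ • (c • HV) ^ k) ψ) n - (((k ! : ℂ)⁻¹ • (c • HW) ^ k) ψ) n)‖
      ≤ ∑' (k : ℕ), ‖(((k ! : ℂ)⁻¹ • (c • HV) ^ k) ψ) n - (((k ! : ℂ)⁻¹ • (c • HW) ^ k) ψ) n‖ :=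
        norm_tsum_le_tsum_norm hsumn
    _ ≤ ∑' (k : ℕ), (2 * ‖c‖ * B) ^ k / k ! * (δ * A * Real.exp (-|(n : ℝ)| / m)) :=
        Summable.tsum_le_tsum hterm hsumn hsum2
    _ = (∑' (k : ℕ), (2 * ‖c‖ * B) ^ k / k !) * (δ * A * Real.exp (-|(n : ℝ)| / m)) :=
        tsum_mul_right
    _ = Real.exp (2 * ‖c‖ * B) * (δ * A * Real.exp (-|(n : ℝ)| / m)) := by
        rw [Real.exp_eq_exp_ℝ, exp_eq_tsum_div]
    _ = δ * A * Real.exp (2 * ‖c‖ * B) * Real.exp (-|(n : ℝ)| / m) := by ring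

lemma summable_major {p : ℝ} (hp : 0 < p) {r : ℝ} (hr0 : 0 ≤ r) (hr1 : r < 1) :
    Summable fun n : ℤ => |(n : ℝ)| ^ p * r ^ n.natAbs := by
  set J := ⌈p⌉₊ with hJdef
  have hJ : p ≤ (J : ℝ) := Nat.le_ceil p
  have hJ0 : J ≠ 0 := (Nat.ceil_pos.2 hp).ne'
  have hmaj : ∀ n : ℤ, |(n : ℝ)| ^ p * r ^ n.natAbs ≤ ((n.natAbs : ℝ)) ^ J * r ^ n.natAbs := by
    intro n
    refine mul_le_mul_of_nonneg_right ?_ (pow_nonneg hr0 _)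
    have habs : |(n : ℝ)| = (n.natAbs : ℝ) := by
      rw [Nat.cast_natAbs, Int.cast_abs]
    rcases eq_or_ne n 0 with h0 | h0
    · subst h0
      simp [Real.zero_rpow hp.ne', zero_pow hJ0]
    · have h1 : (1:ℝ) ≤ |(n:ℝ)| := by
        rw [habs]
        exact_mod_cast Nat.one_le_iff_ne_zero.2 (Int.natAbs_ne_zero.2 h0)
      calc |(n : ℝ)| ^ p ≤ |(n : ℝ)| ^ (J : ℝ) := Real.rpow_le_rpow_of_exponent_le h1 hJ
        _ = ((n.natAbs : ℝ)) ^ J := by rw [habs, Real.rpow_natCast]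
  have hs : Summable fun n : ℤ => ((n.natAbs : ℝ)) ^ J * r ^ n.natAbs := by
    apply Summable.of_nat_of_neg <;>
    · simpa using summable_pow_mul_geometric_of_norm_lt_one J
        (by rwa [Real.norm_eq_abs, abs_of_nonneg hr0] : ‖r‖ < 1)
  exact Summable.of_nonneg_of_le
    (fun n => mul_nonneg (Real.rpow_nonneg (abs_nonneg _) _) (pow_nonneg hr0 _)) hmaj hs


open Complex Filter NormedSpace
set_option maxHeartbeats 2000000 in

/-- Stability of moments under small `ℓ^∞` perturbations of the
potential: for fixed bounded `W`, `t > 0`, `p > 0`, `m ∈ ℕ`, and every `ε > 0`, there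
is `δ > 0` such that for all `V` with `‖V − W‖_∞ < δ` and all `ψ` with
`|ψ(n)| ≤ m e^{-|n|/m}`, the `p`-th moments
`⟨ψ, e^{itH}|X|^p e^{-itH}ψ⟩ = Σ_n |n|^p |(e^{-itH}ψ)(n)|²` for `H = Δ+V` and
`H = Δ+W` differ by less than `ε`. -/
theorem stmt13
    (W : ℤ → ℝ) (hW : ∃ C, ∀ n, |W n| ≤ C)
    (t p : ℝ) (ht : 0 < t) (hp : 0 < p)
    (m : ℕ) (hm : 0 < m)
    (HW : lp (fun _ : ℤ => ℂ) 2 →L[ℂ] lp (fun _ : ℤ => ℂ) 2)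
    (hHW : ∀ u n, (HW u) n = u (n + 1) + u (n - 1) + (W n : ℂ) * u n) :
    ∀ ε : ℝ, 0 < ε → ∃ δ : ℝ, 0 < δ ∧
      ∀ (V : ℤ → ℝ), (∀ n, |V n - W n| < δ) →
      ∀ (HV : lp (fun _ : ℤ => ℂ) 2 →L[ℂ] lp (fun _ : ℤ => ℂ) 2),
        (∀ u n, (HV u) n = u (n + 1) + u (n - 1) + (V n : ℂ) * u n) →
      ∀ ψ : lp (fun _ : ℤ => ℂ) 2,
        (∀ n : ℤ, ‖ψ n‖ ≤ (m : ℝ) * Real.exp (-|(n : ℝ)| / m)) →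
        |(∑' n : ℤ, |(n : ℝ)| ^ p * ‖(NormedSpace.exp ((-(Complex.I * t)) • HV) ψ) n‖ ^ 2)
          - ∑' n : ℤ, |(n : ℝ)| ^ p * ‖(NormedSpace.exp ((-(Complex.I * t)) • HW) ψ) n‖ ^ 2|
          < ε := by
  intro ε hε
  obtain ⟨C₀, hC₀⟩ := hW
  set Cb : ℝ := max C₀ 0 + 1 with hCbdef
  have hCb0 : (0:ℝ) ≤ max C₀ 0 := le_max_right _ _
  have hWb : ∀ n, |W n| ≤ Cb := fun n => by
    have := hC₀ n; have := le_max_left C₀ 0; simp only [hCbdef]; linarith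
  set B : ℝ := (2 + Cb) * Real.exp (1 / (m:ℝ)) with hBdef
  have hB0 : 0 ≤ B := by positivity
  set A : ℝ := (m : ℝ) with hAdef
  have hA : 0 ≤ A := Nat.cast_nonneg m
  set r : ℝ := Real.exp (-(1:ℝ) / m) with hrdef
  have hr0 : 0 < r := Real.exp_pos _
  have hr1 : r < 1 := by
    rw [hrdef, Real.exp_lt_one_iff]
    have hm' : (0:ℝ) < m := by exact_mod_cast hm
    rw [neg_div, neg_lt_zero]
    exact div_pos one_pos hm'
  have hM : Summable (fun n : ℤ => |(n:ℝ)| ^ p * (r^2) ^ n.natAbs) :=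
    summable_major hp (by positivity) (by nlinarith)
  set S : ℝ := ∑' n : ℤ, |(n:ℝ)| ^ p * (r^2) ^ n.natAbs with hSdef
  have hS0 : 0 ≤ S := tsum_nonneg fun n => by positivity
  set P : ℝ := A * Real.exp (2 * t * B) with hPdef
  have hP0 : 0 ≤ P := by positivity
  set Q : ℝ := 2 * P ^ 2 * S with hQdef
  have hQ0 : 0 ≤ Q := by positivity
  refine ⟨min 1 (ε / (Q + 1)), lt_min one_pos (by positivity), ?_⟩
  intro V hVδ HV hHV ψ hψ0
  set δ' : ℝ := min 1 (ε / (Q + 1)) with hδ'def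
  have hδ'0 : 0 ≤ δ' := le_min zero_le_one (by positivity)
  have hδ'1 : δ' ≤ 1 := min_le_left _ _
  have hδ'le : δ' ≤ ε / (Q + 1) := min_le_right _ _
  have hVb : ∀ n, |V n| ≤ Cb := by
    intro n
    have h1 := abs_sub_abs_le_abs_sub (V n) (W n)
    have h2 := (hVδ n).le.trans hδ'1
    have h3 := hC₀ n
    have := le_max_left C₀ 0
    simp only [hCbdef]; linarith
  have hψ : ∀ n : ℤ, ‖ψ n‖ ≤ A * Real.exp (-|(n : ℝ)| / m) := by
    intro n
    rw [hAdef]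
    exact hψ0 n
  -- norm of the scalar
  have hc : ‖(-(Complex.I * (t:ℂ)))‖ = t := by
    rw [norm_neg, norm_mul, Complex.norm_I, one_mul, Complex.norm_real,
      Real.norm_eq_abs, abs_of_pos ht]
  -- pointwise bounds on the two evolved states
  set x : E2 := NormedSpace.exp ((-(Complex.I * t)) • HV) ψ with hxdef
  set y : E2 := NormedSpace.exp ((-(Complex.I * t)) • HW) ψ with hydef
  have hexpmono : Real.exp (t * B) ≤ Real.exp (2 * t * B) :=
    Real.exp_le_exp.2 (by nlinarith)
  have hxb : ∀ n : ℤ, ‖x n‖ ≤ P * Real.exp (-|(n : ℝ)| / m) := by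
    intro n
    have := exp_pointwise (c := -(Complex.I * t)) hA hB0 (pow_bound hVb hHV hA hψ) n
    rw [hc] at this
    refine this.trans ?_
    rw [hPdef]
    exact mul_le_mul_of_nonneg_right (mul_le_mul_of_nonneg_left hexpmono hA)
      (Real.exp_pos _).le
  have hyb : ∀ n : ℤ, ‖y n‖ ≤ P * Real.exp (-|(n : ℝ)| / m) := by
    intro n
    have := exp_pointwise (c := -(Complex.I * t)) hA hB0 (pow_bound hWb hHW hA hψ) n
    rw [hc] at this
    refine this.trans ?_
    rw [hPdef]
    exact mul_le_mul_of_nonneg_right (mul_le_mul_of_nonneg_left hexpmono hA)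
      (Real.exp_pos _).le
  have hdiff : ∀ n : ℤ, ‖x n - y n‖ ≤ δ' * P * Real.exp (-|(n : ℝ)| / m) := by
    intro n
    have hd := diff_bound hVb hWb (fun n => (hVδ n).le) hHV hHW hA hψ
    have := exp_diff_pointwise (c := -(Complex.I * t)) hA hB0 hδ'0 hd n
    rw [hc] at this
    refine this.trans (le_of_eq ?_)
    rw [hPdef]; ring
  -- squared-exponential identity
  have hE2 : ∀ n : ℤ, Real.exp (-|(n : ℝ)| / m) ^ 2 = (r ^ 2) ^ n.natAbs := by
    intro n
    have habs : |(n:ℝ)| = (n.natAbs : ℝ) := by rw [Nat.cast_natAbs, Int.cast_abs]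
    have h1 : Real.exp (-|(n:ℝ)| / m) = r ^ n.natAbs := by
      rw [hrdef, ← Real.exp_nat_mul,
        show ((n.natAbs:ℝ)) * (-(1:ℝ)/m) = -|(n:ℝ)| / m by rw [habs]; ring]
    rw [h1, ← pow_mul, ← pow_mul, Nat.mul_comm]
  set f : ℤ → ℝ := fun n => |(n : ℝ)| ^ p * ‖x n‖ ^ 2 with hfdef
  set g : ℤ → ℝ := fun n => |(n : ℝ)| ^ p * ‖y n‖ ^ 2 with hgdef
  have hfge : ∀ n : ℤ, f n ≤ P ^ 2 * (|(n:ℝ)| ^ p * (r^2) ^ n.natAbs) := by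
    intro n
    have h2 : ‖x n‖ ^ 2 ≤ (P * Real.exp (-|(n:ℝ)| / m)) ^ 2 :=
      pow_le_pow_left₀ (norm_nonneg _) (hxb n) 2
    calc f n ≤ |(n:ℝ)| ^ p * (P * Real.exp (-|(n:ℝ)| / m)) ^ 2 :=
          mul_le_mul_of_nonneg_left h2 (Real.rpow_nonneg (abs_nonneg _) _)
      _ = P ^ 2 * (|(n:ℝ)| ^ p * Real.exp (-|(n:ℝ)| / m) ^ 2) := by ring
      _ = P ^ 2 * (|(n:ℝ)| ^ p * (r^2) ^ n.natAbs) := by rw [hE2 n]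
  have hgge : ∀ n : ℤ, g n ≤ P ^ 2 * (|(n:ℝ)| ^ p * (r^2) ^ n.natAbs) := by
    intro n
    have h2 : ‖y n‖ ^ 2 ≤ (P * Real.exp (-|(n:ℝ)| / m)) ^ 2 :=
      pow_le_pow_left₀ (norm_nonneg _) (hyb n) 2
    calc g n ≤ |(n:ℝ)| ^ p * (P * Real.exp (-|(n:ℝ)| / m)) ^ 2 :=
          mul_le_mul_of_nonneg_left h2 (Real.rpow_nonneg (abs_nonneg _) _)
      _ = P ^ 2 * (|(n:ℝ)| ^ p * Real.exp (-|(n:ℝ)| / m) ^ 2) := by ring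
      _ = P ^ 2 * (|(n:ℝ)| ^ p * (r^2) ^ n.natAbs) := by rw [hE2 n]
  have hfnonneg : ∀ n : ℤ, 0 ≤ f n := fun n => by
    have : (0:ℝ) ≤ |(n:ℝ)| ^ p := Real.rpow_nonneg (abs_nonneg _) _
    positivity
  have hgnonneg : ∀ n : ℤ, 0 ≤ g n := fun n => by
    have : (0:ℝ) ≤ |(n:ℝ)| ^ p := Real.rpow_nonneg (abs_nonneg _) _
    positivity
  have hfs : Summable f := Summable.of_nonneg_of_le hfnonneg hfge (hM.mul_left _)
  have hgs : Summable g := Summable.of_nonneg_of_le hgnonneg hgge (hM.mul_left _)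
  have hfg : ∀ n : ℤ, |f n - g n| ≤ δ' * (2 * P ^ 2) * (|(n:ℝ)| ^ p * (r^2) ^ n.natAbs) := by
    intro n
    have habs2 : |‖x n‖ - ‖y n‖| ≤ ‖x n - y n‖ := abs_norm_sub_norm_le _ _
    have hE := (Real.exp_pos (-|(n:ℝ)| / (m:ℝ))).le
    have hP2 : |‖x n‖ ^ 2 - ‖y n‖ ^ 2|
        ≤ (δ' * P * Real.exp (-|(n:ℝ)| / m)) * (2 * (P * Real.exp (-|(n:ℝ)| / m))) := by
      have hfactor : |‖x n‖ ^ 2 - ‖y n‖ ^ 2| = |‖x n‖ - ‖y n‖| * (‖x n‖ + ‖y n‖) := by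
        rw [← _root_.abs_of_nonneg (add_nonneg (norm_nonneg (x n)) (norm_nonneg (y n))), ← abs_mul]
        congr 1; ring
      rw [hfactor]
      refine mul_le_mul (habs2.trans (hdiff n)) ?_
        (add_nonneg (norm_nonneg _) (norm_nonneg _))
        (mul_nonneg (mul_nonneg hδ'0 hP0) hE)
      have := hxb n; have := hyb n; linarith
    calc |f n - g n| = |(n:ℝ)| ^ p * |‖x n‖ ^ 2 - ‖y n‖ ^ 2| := by
          simp only [hfdef, hgdef, ← mul_sub, abs_mul,
            _root_.abs_of_nonneg (Real.rpow_nonneg (abs_nonneg ((n:ℝ))) p)]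
      _ ≤ |(n:ℝ)| ^ p * ((δ' * P * Real.exp (-|(n:ℝ)| / m)) * (2 * (P * Real.exp (-|(n:ℝ)| / m)))) :=
          mul_le_mul_of_nonneg_left hP2 (Real.rpow_nonneg (abs_nonneg _) _)
      _ = δ' * (2 * P ^ 2) * (|(n:ℝ)| ^ p * Real.exp (-|(n:ℝ)| / m) ^ 2) := by ring
      _ = δ' * (2 * P ^ 2) * (|(n:ℝ)| ^ p * (r^2) ^ n.natAbs) := by rw [hE2 n]
  have habssum : Summable (fun n : ℤ => |f n - g n|) :=
    Summable.of_nonneg_of_le (fun n => abs_nonneg _) hfg (hM.mul_left _)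
  calc |(∑' n : ℤ, f n) - ∑' n : ℤ, g n| = |∑' n : ℤ, (f n - g n)| := by
        rw [Summable.tsum_sub hfs hgs]
    _ ≤ ∑' n : ℤ, |f n - g n| := by
        simpa [Real.norm_eq_abs] using
          norm_tsum_le_tsum_norm (f := fun n : ℤ => f n - g n)
            (by simpa [Real.norm_eq_abs] using habssum)
    _ ≤ ∑' n : ℤ, δ' * (2 * P ^ 2) * (|(n:ℝ)| ^ p * (r^2) ^ n.natAbs) :=
        Summable.tsum_le_tsum hfg habssum (hM.mul_left _)
    _ = δ' * (2 * P ^ 2) * S := tsum_mul_left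
    _ = δ' * Q := by rw [hQdef]; ring
    _ ≤ (ε / (Q + 1)) * Q := mul_le_mul_of_nonneg_right hδ'le hQ0
    _ < ε := by
        rw [div_mul_eq_mul_div, div_lt_iff₀ (by linarith)]
        nlinarith
end
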